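/- The antidiagonal term is the unique monomial of lowest ω-weight in any minor Δ_{I,J}(Z) of the generic n×n matrix Z, provided every variable in the antidiagonal term lies on or above the main antidiagonal of Z. More precisely: for any k×k submatrix with rows I = {i_1 < ... < i_k} and columns J = {j_1 < ... < j_k}, and any permutation σ of {1,...,k} other than the order-reversing one, the ω-weight of the antidiagonal term ∑_{s=1}^{k} ω_{i_s, j_{k+1-s}} is strictly less than the weight ∑_{s=1}^{k} ω_{i_s, j_{σ(s)}}, where ω_{ij} = 3^(n-i-j) if i+j ≤ n and ω_{ij} = 0 if i+j > n. -/

import Mathlib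

/-- The weight matrix: ω_{ij} = 3^(n-i-j) if i+j ≤ n, and 0 otherwise
(indices i, j range over 1,…,n). -/
def gcWeight (n i j : ℕ) : ℤ := if i + j ≤ n then 3 ^ (n - i - j) else 0

lemma gcWeight_nonneg (n i j : ℕ) : 0 ≤ gcWeight n i j := by
  unfold gcWeight; split <;> positivity

/-- Strict Monge-type exchange inequality for the weights. -/
lemma gcMonge (n i i' j j' : ℕ) (hii : i < i') (hjj : j < j') (h : i + j' ≤ n + 1) :
    gcWeight n i j' + gcWeight n i' j < gcWeight n i j + gcWeight n i' j' := by
  have hij : i + j ≤ n := by omega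
  have h1 : gcWeight n i j = 3 ^ (n - i - j) := if_pos hij
  have h2 : 0 ≤ gcWeight n i' j' := gcWeight_nonneg n i' j'
  have key : gcWeight n i j' + gcWeight n i' j < 3 ^ (n - i - j) := by
    rcases Nat.eq_zero_or_pos (n - i - j) with hm | hm
    · have e1 : gcWeight n i j' = 0 := if_neg (by omega)
      have e2 : gcWeight n i' j = 0 := if_neg (by omega)
      rw [e1, e2]; norm_num
    · have e1 : gcWeight n i j' ≤ 3 ^ (n - i - j - 1) := by
        unfold gcWeight; split
        · exact pow_le_pow_right₀ (by norm_num) (by omega)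
        · positivity
      have e2 : gcWeight n i' j ≤ 3 ^ (n - i - j - 1) := by
        unfold gcWeight; split
        · exact pow_le_pow_right₀ (by norm_num) (by omega)
        · positivity
      have e3 : (3 : ℤ) ^ (n - i - j) = 3 * 3 ^ (n - i - j - 1) := by
        rw [← pow_succ']
        congr 1
        omega
      have e4 : (0:ℤ) < 3 ^ (n - i - j - 1) := by positivity
      linarith
  linarith

lemma gcMain : ∀ (k n : ℕ) (I J : Fin k → ℕ), StrictMono I → StrictMono J →
    (∀ s : Fin k, I s + J s.rev ≤ n + 1) →
    ∀ σ : Equiv.Perm (Fin k), σ ≠ Fin.revPerm →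
    ∑ s : Fin k, gcWeight n (I s) (J s.rev) < ∑ s : Fin k, gcWeight n (I s) (J (σ s)) := by
  intro k
  induction k with
  | zero =>
    intro n I J _ _ _ σ hσ
    exact absurd (Subsingleton.elim σ _) hσ
  | succ k ih =>
    intro n I J hI hJ hanti σ hσ
    -- reduction for permutations fixing the "corner": σ 0 = last
    have reduce : ∀ τ : Equiv.Perm (Fin (k+1)), τ 0 = Fin.last k →
        (∑ s : Fin (k+1), gcWeight n (I s) (J s.rev)
          ≤ ∑ s : Fin (k+1), gcWeight n (I s) (J (τ s))) ∧
        (τ ≠ Fin.revPerm →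
          ∑ s : Fin (k+1), gcWeight n (I s) (J s.rev)
            < ∑ s : Fin (k+1), gcWeight n (I s) (J (τ s))) := by
      intro τ h0
      have hne : ∀ s : Fin k, τ s.succ ≠ Fin.last k := by
        intro s h
        exact Fin.succ_ne_zero s (τ.injective (h.trans h0.symm))
      have hcast : ∀ s : Fin k, Fin.castSucc ((τ s.succ).castPred (hne s)) = τ s.succ :=
        fun s => Fin.castSucc_castPred _ _
      have ginj : Function.Injective (fun s : Fin k => (τ s.succ).castPred (hne s)) := by
        intro a b hab
        have : τ a.succ = τ b.succ := by
          rw [← hcast a, ← hcast b]; exact congrArg Fin.castSucc hab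
        exact Fin.succ_injective _ (τ.injective this)
      let τ' : Equiv.Perm (Fin k) :=
        Equiv.ofBijective _ (Finite.injective_iff_bijective.mp ginj)
      have hτ' : ∀ s, Fin.castSucc (τ' s) = τ s.succ := hcast
      -- rewrite the two sums
      have e1 : ∑ s : Fin (k+1), gcWeight n (I s) (J (τ s))
          = gcWeight n (I 0) (J (Fin.last k))
            + ∑ s : Fin k, gcWeight n (I s.succ) (J (Fin.castSucc (τ' s))) := by
        rw [Fin.sum_univ_succ, h0]
        try congr 1
        all_goals exact Finset.sum_congr rfl fun s _ => by rw [hτ' s]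
      have e2 : ∑ s : Fin (k+1), gcWeight n (I s) (J s.rev)
          = gcWeight n (I 0) (J (Fin.last k))
            + ∑ s : Fin k, gcWeight n (I s.succ) (J (Fin.castSucc s.rev)) := by
        rw [Fin.sum_univ_succ, Fin.rev_zero]
        try congr 1
        all_goals exact Finset.sum_congr rfl fun s _ => by rw [Fin.rev_succ]
      have hI' : StrictMono (fun s : Fin k => I s.succ) := hI.comp Fin.strictMono_succ
      have hJ' : StrictMono (fun s : Fin k => J (Fin.castSucc s)) :=
        hJ.comp Fin.strictMono_castSucc
      have hanti' : ∀ s : Fin k, I s.succ + J (Fin.castSucc s.rev) ≤ n + 1 := by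
        intro s
        have := hanti s.succ
        rwa [Fin.rev_succ] at this
      have hstep : τ' ≠ Fin.revPerm →
          ∑ s : Fin k, gcWeight n (I s.succ) (J (Fin.castSucc s.rev))
            < ∑ s : Fin k, gcWeight n (I s.succ) (J (Fin.castSucc (τ' s))) :=
        fun h => ih n (fun s => I s.succ) (fun s => J (Fin.castSucc s)) hI' hJ' hanti' τ' h
      have himp : τ' = Fin.revPerm → τ = Fin.revPerm := by
        intro h
        ext s
        induction s using Fin.cases with
        | zero => rw [h0]; simp
        | succ i =>
          have : τ' i = i.rev := by rw [h]; rfl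
          have h2 : τ i.succ = Fin.castSucc i.rev := by rw [← hτ' i, this]
          rw [h2]
          simp [Fin.rev_succ]
      constructor
      · rcases eq_or_ne τ' Fin.revPerm with h | h
        · rw [e1, e2]
          refine le_of_eq ?_
          congr 1
          exact Finset.sum_congr rfl fun s _ => by rw [h]; rfl
        · rw [e1, e2]
          exact (add_le_add_iff_left _).mpr (le_of_lt (hstep h))
      · intro hτ
        rw [e1, e2]
        exact (add_lt_add_iff_left _).mpr (hstep fun h => hτ (himp h))
    by_cases h0 : σ 0 = Fin.last k
    · exact (reduce σ h0).2 hσ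
    · -- exchange argument
      set u := σ.symm (Fin.last k) with hu
      have hσu : σ u = Fin.last k := σ.apply_symm_apply _
      have hu0 : u ≠ 0 := by
        intro h
        rw [h] at hσu
        exact h0 hσu
      set τ : Equiv.Perm (Fin (k+1)) := σ * Equiv.swap 0 u with hτdef
      have hτ0 : τ 0 = Fin.last k := by
        simp only [hτdef, Equiv.Perm.mul_apply, Equiv.swap_apply_left]
        exact hσu
      have hτu : τ u = σ 0 := by
        simp only [hτdef, Equiv.Perm.mul_apply, Equiv.swap_apply_right]
      have hτs : ∀ s : Fin (k+1), s ≠ 0 → s ≠ u → τ s = σ s := by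
        intro s hs0 hsu
        simp only [hτdef, Equiv.Perm.mul_apply, Equiv.swap_apply_of_ne_of_ne hs0 hsu]
      -- split both sums at {0, u}
      have hpair : ({0, u} : Finset (Fin (k+1))) ⊆ Finset.univ := Finset.subset_univ _
      have split : ∀ ρ : Equiv.Perm (Fin (k+1)),
          ∑ s : Fin (k+1), gcWeight n (I s) (J (ρ s))
            = gcWeight n (I 0) (J (ρ 0)) + gcWeight n (I u) (J (ρ u))
              + ∑ s ∈ Finset.univ \ {0, u}, gcWeight n (I s) (J (ρ s)) := by
        intro ρ
        rw [← Finset.sum_sdiff hpair, Finset.sum_pair (Ne.symm hu0)]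
        ring
      have hR : ∑ s ∈ Finset.univ \ {0, u}, gcWeight n (I s) (J (τ s))
          = ∑ s ∈ Finset.univ \ {0, u}, gcWeight n (I s) (J (σ s)) := by
        refine Finset.sum_congr rfl fun s hs => ?_
        simp only [Finset.mem_sdiff, Finset.mem_insert, Finset.mem_singleton] at hs
        rw [hτs s (fun h => hs.2 (Or.inl h)) (fun h => hs.2 (Or.inr h))]
      -- Monge inequality
      have hlt : σ 0 < Fin.last k := lt_of_le_of_ne (Fin.le_last _) h0
      have hmonge : gcWeight n (I 0) (J (Fin.last k)) + gcWeight n (I u) (J (σ 0))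
          < gcWeight n (I 0) (J (σ 0)) + gcWeight n (I u) (J (Fin.last k)) := by
        have h1 : I 0 < I u := hI (Fin.pos_of_ne_zero hu0)
        have h2 : J (σ 0) < J (Fin.last k) := hJ hlt
        have h3 : I 0 + J (Fin.last k) ≤ n + 1 := by
          have := hanti 0
          rwa [Fin.rev_zero] at this
        exact gcMonge n (I 0) (I u) (J (σ 0)) (J (Fin.last k)) h1 h2 h3
      have hτle := (reduce τ hτ0).1
      have e3 := split σ
      have e4 := split τ
      rw [hτ0, hτu] at e4
      rw [hσu] at e3
      linarith

/-- The antidiagonal term is the unique monomial of lowest ω-weight in a minor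
Δ_{I,J}(Z), provided all its variables lie on or above the main antidiagonal:
for strictly increasing row indices I and column indices J in {1,…,n} with
i_s + j_{k+1-s} ≤ n+1 for all s, every permutation σ other than the
order-reversing one gives a strictly larger weight. -/
theorem stmt_1 (n k : ℕ) (hk : 1 ≤ k) (I J : Fin k → ℕ)
    (hI : StrictMono I) (hJ : StrictMono J)
    (hI1 : ∀ s, 1 ≤ I s) (hIn : ∀ s, I s ≤ n)
    (hJ1 : ∀ s, 1 ≤ J s) (hJn : ∀ s, J s ≤ n)
    (hanti : ∀ s : Fin k, I s + J s.rev ≤ n + 1)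
    (σ : Equiv.Perm (Fin k)) (hσ : σ ≠ Fin.revPerm) :
    ∑ s : Fin k, gcWeight n (I s) (J s.rev)
      < ∑ s : Fin k, gcWeight n (I s) (J (σ s)) := by
  exact gcMain k n I J hI hJ hanti σ hσ
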